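/- Let p ≥ 0, κ > 0, and 0 < y < 1/κ. Then n·n_{ρy} − n_y·n_ρ > 0; in fact, n·n_{ρy} − n_y·n_ρ = (1−yκ)^p·(1+y)·[ (1+κ)^{p+1}·(1 + pyκ + (p+1)y²κ) − (1−yκ)^{p+2} ], and this quantity is strictly positive. -/
import Mathlib


/- The quantities `n`, `n_y`, `n_ρ`, `n_{ρy}`, `n_{ρρ}`, `n_{ρρy}`, with real powers
of positive bases. -/

noncomputable def nfun (p κ y : ℝ) : ℝ :=
  (1 + κ) ^ (p + 2) * y + (1 - y * κ) ^ (p + 2)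

noncomputable def nfun_y (p κ y : ℝ) : ℝ :=
  (1 + κ) ^ (p + 2) - (1 - y * κ) ^ (p + 1) * (1 + (p + 2) * κ + (p + 1) * y * κ)

noncomputable def nfun_ρ (p κ y : ℝ) : ℝ :=
  y * ((1 + κ) ^ (p + 1) - (1 - y * κ) ^ (p + 1))

noncomputable def nfun_ρy (p κ y : ℝ) : ℝ :=
  (1 + κ) ^ (p + 1) - (1 - y * κ) ^ p * (1 - (p + 2) * y * κ - (p + 1) * y ^ 2 * κ)

noncomputable def nfun_ρρ (p κ y : ℝ) : ℝ :=
  (1 + κ) ^ p * y + (1 - y * κ) ^ p * y ^ 2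

noncomputable def nfun_ρρy (p κ y : ℝ) : ℝ :=
  (1 + κ) ^ p +
    (1 - y * κ) ^ (p - 1) * (2 * y + y ^ 2 - (p + 2) * y ^ 2 * κ - (p + 1) * y ^ 3 * κ)

theorem stmt14 (p κ y : ℝ) (hp : 0 ≤ p) (hκ : 0 < κ) (hy0 : 0 < y) (hy1 : y < 1 / κ) :
    nfun p κ y * nfun_ρy p κ y - nfun_y p κ y * nfun_ρ p κ y =
      (1 - y * κ) ^ p * (1 + y) *
        ((1 + κ) ^ (p + 1) * (1 + p * y * κ + (p + 1) * y ^ 2 * κ) - (1 - y * κ) ^ (p + 2)) ∧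
    0 < nfun p κ y * nfun_ρy p κ y - nfun_y p κ y * nfun_ρ p κ y := by
  have hu : (0:ℝ) < 1 + κ := by linarith
  have hv : (0:ℝ) < 1 - y * κ := by
    have : y * κ < 1 := by
      have := (lt_div_iff₀ hκ).mp hy1
      linarith
    linarith
  have hv1 : 1 - y * κ < 1 := by nlinarith
  have eu2 : (1 + κ) ^ (p + 2) = (1 + κ) ^ p * ((1 + κ) * (1 + κ)) := by
    rw [Real.rpow_add hu, show (2:ℝ) = (1:ℝ)+1 by norm_num, Real.rpow_add hu, Real.rpow_one]
  have eu1 : (1 + κ) ^ (p + 1) = (1 + κ) ^ p * (1 + κ) := by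
    rw [Real.rpow_add hu, Real.rpow_one]
  have ev2 : (1 - y * κ) ^ (p + 2) = (1 - y * κ) ^ p * ((1 - y * κ) * (1 - y * κ)) := by
    rw [Real.rpow_add hv, show (2:ℝ) = (1:ℝ)+1 by norm_num, Real.rpow_add hv, Real.rpow_one]
  have ev1 : (1 - y * κ) ^ (p + 1) = (1 - y * κ) ^ p * (1 - y * κ) := by
    rw [Real.rpow_add hv, Real.rpow_one]
  have hA : 1 ≤ (1 + κ) ^ p := Real.one_le_rpow (by linarith) hp
  have hB0 : 0 < (1 - y * κ) ^ p := Real.rpow_pos_of_pos hv p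
  have hB1 : (1 - y * κ) ^ p ≤ 1 := Real.rpow_le_one (le_of_lt hv) (le_of_lt hv1) hp
  have heq : nfun p κ y * nfun_ρy p κ y - nfun_y p κ y * nfun_ρ p κ y =
      (1 - y * κ) ^ p * (1 + y) *
        ((1 + κ) ^ (p + 1) * (1 + p * y * κ + (p + 1) * y ^ 2 * κ) - (1 - y * κ) ^ (p + 2)) := by
    unfold nfun nfun_ρy nfun_y nfun_ρ
    rw [eu2, eu1, ev2, ev1]
    ring
  refine ⟨heq, ?_⟩
  rw [heq, eu1]
  have hS : (1:ℝ) ≤ 1 + p * y * κ + (p + 1) * y ^ 2 * κ := by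
    nlinarith [sq_nonneg y, mul_nonneg hp (mul_pos hy0 hκ).le,
      mul_nonneg (mul_nonneg (by linarith : (0:ℝ) ≤ p + 1) (sq_nonneg y)) hκ.le]
  have hA' : (1:ℝ) < (1 + κ) ^ p * (1 + κ) := by nlinarith
  have h1 : (1:ℝ) < (1 + κ) ^ p * (1 + κ) * (1 + p * y * κ + (p + 1) * y ^ 2 * κ) := by
    nlinarith [hA', hS]
  have h2 : (1 - y * κ) ^ p * ((1 - y * κ) * (1 - y * κ)) < 1 := by
    nlinarith
  rw [ev2]
  have : 0 < (1 - y * κ) ^ p * (1 + y) := by positivity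
  nlinarith
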